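/- Let p be an odd prime and let B ⊂ GL_2(F_p) be a subgroup of upper triangular matrices containing a matrix g = [[a,b],[0,c]] with a ≠ c. Let h = [[1, b/(c−a)],[0,1]] and B' = h⁻¹ B h. Then B' decomposes as B' = B'_d · B'_1, where B'_d = B' ∩ {diagonal matrices} and B'_1 = B' ∩ {[[1,b],[0,1]] : b ∈ F_p}. -/

import Mathlib

open Matrix

section Aux

variable {p : ℕ} [Fact p.Prime]

private lemma coe_inv_eq_aux {x : GL (Fin 2) (ZMod p)} {N : Matrix (Fin 2) (Fin 2) (ZMod p)}
    (hN : (x : Matrix (Fin 2) (Fin 2) (ZMod p)) * N = 1) :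
    ((x⁻¹ : GL (Fin 2) (ZMod p)) : Matrix (Fin 2) (Fin 2) (ZMod p)) = N := by
  calc ((x⁻¹ : GL (Fin 2) (ZMod p)) : Matrix (Fin 2) (Fin 2) (ZMod p))
      = ((x⁻¹ : GL (Fin 2) (ZMod p)) : Matrix (Fin 2) (Fin 2) (ZMod p)) *
        ((x : Matrix (Fin 2) (Fin 2) (ZMod p)) * N) := by rw [hN, mul_one]
    _ = (((x⁻¹ : GL (Fin 2) (ZMod p)) : Matrix (Fin 2) (Fin 2) (ZMod p)) *
        (x : Matrix (Fin 2) (Fin 2) (ZMod p))) * N := by rw [mul_assoc]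
    _ = N := by rw [Units.inv_mul, one_mul]

private lemma coe_pow_unipotent_aux (z : GL (Fin 2) (ZMod p)) (s : ZMod p)
    (hz : (z : Matrix (Fin 2) (Fin 2) (ZMod p)) = !![1, s; 0, 1]) (n : ℕ) :
    ((z ^ n : GL (Fin 2) (ZMod p)) : Matrix (Fin 2) (Fin 2) (ZMod p)) = !![1, (n : ZMod p) * s; 0, 1] := by
  induction n with
  | zero => simp [Matrix.one_fin_two]
  | succ n ih =>
    rw [pow_succ, Units.val_mul, ih, hz]
    ext i j
    fin_cases i <;> fin_cases j <;>
      simp [Matrix.mul_apply, Fin.sum_univ_two] <;> push_cast <;> ring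

end Aux

/-- Kohnen–Zagier/Lansky–Ramakrishna decomposition: for an odd prime `p` and a subgroup
`B` of upper triangular matrices in `GL₂(𝔽_p)` containing a matrix `g = [[a,b],[0,c]]`
with `a ≠ c`, the conjugate `B' = h⁻¹ B h` by `h = [[1, b/(c−a)],[0,1]]` decomposes as
`B' = B'_d · B'_1` with `B'_d` the diagonal part and `B'_1` the unipotent part. -/
theorem borel_conjugate_decomposition
    (p : ℕ) [Fact p.Prime] (hodd : p ≠ 2)
    (B : Subgroup (GL (Fin 2) (ZMod p)))
    (hB : ∀ x ∈ B, (x : Matrix (Fin 2) (Fin 2) (ZMod p)) 1 0 = 0)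
    (g : GL (Fin 2) (ZMod p)) (hg : g ∈ B)
    (hac : (g : Matrix (Fin 2) (Fin 2) (ZMod p)) 0 0
         ≠ (g : Matrix (Fin 2) (Fin 2) (ZMod p)) 1 1)
    (h : GL (Fin 2) (ZMod p))
    (hh : (h : Matrix (Fin 2) (Fin 2) (ZMod p)) =
      !![1, (g : Matrix (Fin 2) (Fin 2) (ZMod p)) 0 1 /
           ((g : Matrix (Fin 2) (Fin 2) (ZMod p)) 1 1
            - (g : Matrix (Fin 2) (Fin 2) (ZMod p)) 0 0); 0, 1])
    (B' : Subgroup (GL (Fin 2) (ZMod p)))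
    (hB' : B' = Subgroup.map (MulAut.conj h⁻¹).toMonoidHom B) :
    ∀ x ∈ B', ∃ d ∈ B', ∃ u ∈ B',
      ((d : Matrix (Fin 2) (Fin 2) (ZMod p)) 0 1 = 0 ∧
       (d : Matrix (Fin 2) (Fin 2) (ZMod p)) 1 0 = 0) ∧
      ((u : Matrix (Fin 2) (Fin 2) (ZMod p)) 0 0 = 1 ∧
       (u : Matrix (Fin 2) (Fin 2) (ZMod p)) 1 1 = 1 ∧
       (u : Matrix (Fin 2) (Fin 2) (ZMod p)) 1 0 = 0) ∧
      x = d * u := by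
  haveI : NeZero p := ⟨(Fact.out : p.Prime).ne_zero⟩
  set a : ZMod p := (g : Matrix (Fin 2) (Fin 2) (ZMod p)) 0 0 with ha
  set b : ZMod p := (g : Matrix (Fin 2) (Fin 2) (ZMod p)) 0 1 with hb
  set c : ZMod p := (g : Matrix (Fin 2) (Fin 2) (ZMod p)) 1 1 with hc
  set q : ZMod p := b / (c - a) with hq
  have hca : c - a ≠ 0 := sub_ne_zero_of_ne hac.symm
  have hhinv : ((h⁻¹ : GL (Fin 2) (ZMod p)) : Matrix (Fin 2) (Fin 2) (ZMod p)) = !![1, -q; 0, 1] := by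
    apply coe_inv_eq_aux
    rw [hh]
    ext i j
    fin_cases i <;> fin_cases j <;>
      simp [Matrix.mul_apply, Fin.sum_univ_two, Matrix.one_apply] <;> ring
  -- every element of B' is upper triangular
  have hUT : ∀ x ∈ B', (x : Matrix (Fin 2) (Fin 2) (ZMod p)) 1 0 = 0 := by
    intro x hx
    rw [hB'] at hx
    obtain ⟨y, hyB, rfl⟩ := hx
    have hy10 := hB y hyB
    show ((h⁻¹ * y * (h⁻¹)⁻¹ : GL (Fin 2) (ZMod p)) : Matrix (Fin 2) (Fin 2) (ZMod p)) 1 0 = 0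
    rw [inv_inv]
    simp only [Units.val_mul, hhinv, hh]
    simp [Matrix.mul_apply, Matrix.vecMul, dotProduct, Fin.sum_univ_two, hy10]
  -- diagonal entries of any upper triangular unit are nonzero
  have hdet : ∀ x : GL (Fin 2) (ZMod p), (x : Matrix (Fin 2) (Fin 2) (ZMod p)) 1 0 = 0 →
      (x : Matrix (Fin 2) (Fin 2) (ZMod p)) 0 0 ≠ 0 ∧ (x : Matrix (Fin 2) (Fin 2) (ZMod p)) 1 1 ≠ 0 := by
    intro x h10
    have hu := Matrix.isUnits_det_units x
    rw [Matrix.det_fin_two, h10, mul_zero, sub_zero, isUnit_iff_ne_zero, mul_ne_zero_iff] at hu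
    exact hu
  have hg10 := hB g hg
  have ⟨ha0, hc0⟩ := hdet g hg10
  have hgM : (g : Matrix (Fin 2) (Fin 2) (ZMod p)) = !![a, b; 0, c] := by
    rw [← hg10, ha, hb, hc]
    exact Matrix.eta_fin_two _
  -- the conjugated generator is diagonal
  set g' : GL (Fin 2) (ZMod p) := (MulAut.conj h⁻¹).toMonoidHom g with hg'def
  have hg'B : g' ∈ B' := by rw [hB']; exact ⟨g, hg, rfl⟩
  have hg'M : (g' : Matrix (Fin 2) (Fin 2) (ZMod p)) = !![a, 0; 0, c] := by
    show ((h⁻¹ * g * (h⁻¹)⁻¹ : GL (Fin 2) (ZMod p)) : Matrix (Fin 2) (Fin 2) (ZMod p)) = _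
    rw [inv_inv]
    simp only [Units.val_mul, hhinv, hh, hgM]
    ext i j
    fin_cases i <;> fin_cases j <;>
      simp [Matrix.mul_apply, Fin.sum_univ_two, hq] <;> field_simp <;> ring
  have hg'inv : ((g'⁻¹ : GL (Fin 2) (ZMod p)) : Matrix (Fin 2) (Fin 2) (ZMod p)) = !![a⁻¹, 0; 0, c⁻¹] := by
    apply coe_inv_eq_aux
    rw [hg'M]
    ext i j
    fin_cases i <;> fin_cases j <;>
      simp [Matrix.mul_apply, Fin.sum_univ_two, Matrix.one_apply] <;> field_simp [show a ≠ 0 from ha0, show c ≠ 0 from hc0]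
  -- main argument
  intro x hx
  have hx10 := hUT x hx
  have ⟨hα, hγ⟩ := hdet x hx10
  set α : ZMod p := (x : Matrix (Fin 2) (Fin 2) (ZMod p)) 0 0 with hαd
  set β : ZMod p := (x : Matrix (Fin 2) (Fin 2) (ZMod p)) 0 1 with hβd
  set γ : ZMod p := (x : Matrix (Fin 2) (Fin 2) (ZMod p)) 1 1 with hγd
  have hxM : (x : Matrix (Fin 2) (Fin 2) (ZMod p)) = !![α, β; 0, γ] := by
    rw [← hx10, hαd, hβd, hγd]
    exact Matrix.eta_fin_two _
  have hxinv : ((x⁻¹ : GL (Fin 2) (ZMod p)) : Matrix (Fin 2) (Fin 2) (ZMod p))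
      = !![α⁻¹, -(β * α⁻¹ * γ⁻¹); 0, γ⁻¹] := by
    apply coe_inv_eq_aux
    rw [hxM]
    ext i j
    fin_cases i <;> fin_cases j <;>
      simp [Matrix.mul_apply, Fin.sum_univ_two, Matrix.one_apply] <;> field_simp <;> ring
  set s : ZMod p := β * α⁻¹ * c⁻¹ * (a - c) with hs
  set z : GL (Fin 2) (ZMod p) := x⁻¹ * g' * x * g'⁻¹ with hzdef
  have hzB : z ∈ B' := mul_mem (mul_mem (mul_mem (inv_mem hx) hg'B) hx) (inv_mem hg'B)
  have hzM : (z : Matrix (Fin 2) (Fin 2) (ZMod p)) = !![1, s; 0, 1] := by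
    rw [hzdef]
    simp only [Units.val_mul, hxinv, hg'M, hxM, hg'inv]
    ext i j
    fin_cases i <;> fin_cases j <;>
      simp [Matrix.mul_apply, Fin.sum_univ_two, hs] <;> field_simp [show a ≠ 0 from ha0, show c ≠ 0 from hc0] <;> ring
  set k : ZMod p := (a - c)⁻¹ * c with hk
  set u : GL (Fin 2) (ZMod p) := z ^ k.val with hudef
  have huB : u ∈ B' := pow_mem hzB _
  have hks : (k.val : ZMod p) * s = α⁻¹ * β := by
    rw [ZMod.natCast_zmod_val, hk, hs]
    have hacne : a - c ≠ 0 := sub_ne_zero_of_ne hac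
    field_simp [show c ≠ 0 from hc0]
  have huM : (u : Matrix (Fin 2) (Fin 2) (ZMod p)) = !![1, α⁻¹ * β; 0, 1] := by
    rw [hudef, coe_pow_unipotent_aux z s hzM, hks]
  have huinv : ((u⁻¹ : GL (Fin 2) (ZMod p)) : Matrix (Fin 2) (Fin 2) (ZMod p))
      = !![1, -(α⁻¹ * β); 0, 1] := by
    apply coe_inv_eq_aux
    rw [huM]
    ext i j
    fin_cases i <;> fin_cases j <;>
      simp [Matrix.mul_apply, Fin.sum_univ_two, Matrix.one_apply] <;> ring
  set d : GL (Fin 2) (ZMod p) := x * u⁻¹ with hddef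
  have hdB : d ∈ B' := mul_mem hx (inv_mem huB)
  have hdM : (d : Matrix (Fin 2) (Fin 2) (ZMod p)) = !![α, 0; 0, γ] := by
    rw [hddef]
    simp only [Units.val_mul, hxM, huinv]
    ext i j
    fin_cases i <;> fin_cases j <;>
      simp [Matrix.mul_apply, Fin.sum_univ_two] <;> field_simp <;> ring
  refine ⟨d, hdB, u, huB, ⟨?_, ?_⟩, ⟨?_, ?_, ?_⟩, ?_⟩
  · rw [hdM]; simp
  · rw [hdM]; simp
  · rw [huM]; simp
  · rw [huM]; simp
  · rw [huM]; simp
  · rw [hddef]; exact (inv_mul_cancel_right x u).symm
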